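/- Let n, r ≥ 1, let β_1, …, β_r ∈ ℝ^n, and let a_1, …, a_r > 0 be positive real weights. Assume the convex hull conv{β_1, …, β_r} has nonempty interior in ℝ^n. Define μ : ℝ^n → ℝ^n by μ(t) = (∑_{j=1}^r a_j e^{⟨β_j, t⟩} β_j) / (∑_{j=1}^r a_j e^{⟨β_j, t⟩}), where ⟨·,·⟩ is the standard inner product on ℝ^n. Then the range of μ is exactly the interior of conv{β_1, …, β_r}. -/

import Mathlib

open Finset

/-- Halfspace bound: a linear functional on the convex hull is bounded by its max on points. -/
lemma aux_halfspace {n r : ℕ} (β : Fin r → (Fin n → ℝ)) {t : Fin n → ℝ} {M : ℝ}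
    (h : ∀ j, ∑ i, β j i * t i ≤ M) {y : Fin n → ℝ}
    (hy : y ∈ convexHull ℝ (Set.range β)) : ∑ i, y i * t i ≤ M := by
  have hlin : IsLinearMap ℝ (fun x : Fin n → ℝ => ∑ i, x i * t i) := by
    constructor
    · intro x y; simp [add_mul, Finset.sum_add_distrib]
    · intro c x; simp [Finset.mul_sum, mul_assoc]
  have hconv : Convex ℝ {x : Fin n → ℝ | ∑ i, x i * t i ≤ M} :=
    convex_halfSpace_le hlin M
  have hsub : convexHull ℝ (Set.range β) ⊆ {x : Fin n → ℝ | ∑ i, x i * t i ≤ M} := by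
    apply convexHull_min _ hconv
    rintro x ⟨j, rfl⟩
    exact h j
  exact hsub hy

/-- Representation of a point of the hull as a convex combination indexed by `Fin r`. -/
lemma aux_rep {n r : ℕ} (β : Fin r → (Fin n → ℝ)) {x : Fin n → ℝ}
    (hx : x ∈ convexHull ℝ (Set.range β)) :
    ∃ d : Fin r → ℝ, (∀ j, 0 ≤ d j) ∧ ∑ j, d j = 1 ∧ ∑ j, d j • β j = x := by
  rw [mem_convexHull_iff_exists_fintype] at hx
  obtain ⟨ι, _, w, z, hw0, hw1, hz, hxx⟩ := hx
  choose g hg using hz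
  refine ⟨fun j => ∑ k ∈ univ.filter (fun k => g k = j), w k, ?_, ?_, ?_⟩
  · intro j; exact Finset.sum_nonneg fun k _ => hw0 k
  · rw [Finset.sum_fiberwise]; exact hw1
  · calc ∑ j, (∑ k ∈ univ.filter (fun k => g k = j), w k) • β j
        = ∑ j, ∑ k ∈ univ.filter (fun k => g k = j), w k • β (g k) := by
          refine Finset.sum_congr rfl fun j _ => ?_
          rw [Finset.sum_smul]
          refine Finset.sum_congr rfl fun k hk => ?_
          rw [(Finset.mem_filter.mp hk).2]
      _ = ∑ k, w k • β (g k) := Finset.sum_fiberwise _ _ _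
      _ = x := by simp_rw [hg]; exact hxx

/-- A strictly positive convex combination of all the points lies in the interior of the hull,
provided the interior is nonempty. -/
lemma aux_pos_interior {n r : ℕ} (hr : 1 ≤ r) (β : Fin r → (Fin n → ℝ)) {w : Fin r → ℝ}
    (hw : ∀ j, 0 < w j) (hw1 : ∑ j, w j = 1)
    (hint : (interior (convexHull ℝ (Set.range β))).Nonempty) :
    ∑ j, w j • β j ∈ interior (convexHull ℝ (Set.range β)) := by
  obtain ⟨z, hz⟩ := hint
  obtain ⟨d, hd0, hd1, hdz⟩ := aux_rep β (interior_subset hz)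
  have hne : (univ : Finset (Fin r)).Nonempty := ⟨⟨0, hr⟩, mem_univ _⟩
  set m : ℝ := univ.inf' hne w with hm
  have hmpos : 0 < m := (Finset.lt_inf'_iff hne).2 fun j _ => hw j
  have hmle : ∀ j, m ≤ w j := fun j => Finset.inf'_le _ (mem_univ j)
  have hwle1 : ∀ j, w j ≤ 1 := by
    intro j
    rw [← hw1]
    exact Finset.single_le_sum (fun k _ => (hw k).le) (mem_univ j)
  have hdle1 : ∀ j, d j ≤ 1 := by
    intro j
    rw [← hd1]
    exact Finset.single_le_sum (fun k _ => hd0 k) (mem_univ j)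
  set δ : ℝ := m / 2 with hδ
  have hδpos : 0 < δ := by positivity
  have hδlt1 : δ < 1 := by
    have := hwle1 ⟨0, hr⟩
    have := hmle ⟨0, hr⟩
    simp only [hδ]; linarith
  have h1δ : (0:ℝ) < 1 - δ := by linarith
  set u : Fin r → ℝ := fun j => (w j - δ * d j) / (1 - δ) with hu
  have hu0 : ∀ j, 0 ≤ u j := by
    intro j
    apply div_nonneg _ h1δ.le
    have h1 : δ * d j ≤ δ * 1 := by
      apply mul_le_mul_of_nonneg_left (hdle1 j) hδpos.le
    have h2 : m ≤ w j := hmle j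
    simp only [hδ] at *
    nlinarith
  have hu1 : ∑ j, u j = 1 := by
    simp only [hu, div_eq_mul_inv, ← Finset.sum_mul]
    rw [Finset.sum_sub_distrib, ← Finset.mul_sum, hw1, hd1]
    field_simp
  set q : Fin n → ℝ := ∑ j, u j • β j with hq
  have hqmem : q ∈ convexHull ℝ (Set.range β) :=
    mem_convexHull_of_exists_fintype u β hu0 hu1 (fun j => ⟨j, rfl⟩) rfl
  have hcombo : δ • z + (1 - δ) • q = ∑ j, w j • β j := by
    rw [hq, Finset.smul_sum, ← hdz, Finset.smul_sum]
    rw [← Finset.sum_add_distrib]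
    refine Finset.sum_congr rfl fun j _ => ?_
    rw [smul_smul, smul_smul, ← add_smul]
    simp only [hu]
    field_simp
    congr 1; ring
  rw [← hcombo]
  exact (convex_convexHull ℝ _).combo_interior_self_mem_interior hz hqmem hδpos h1δ.le
    (by ring)

lemma aux_norm_sq {n : ℕ} (hn : 1 ≤ n) (t : Fin n → ℝ) : ‖t‖ ^ 2 ≤ ∑ i, t i * t i := by
  have hne : (univ : Finset (Fin n)).Nonempty := ⟨⟨0, hn⟩, mem_univ _⟩
  obtain ⟨i0, _, hi0⟩ := Finset.exists_mem_eq_sup univ hne (fun i => (‖t i‖₊ : NNReal))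
  have hnorm : ‖t‖ = ‖t i0‖ := by
    rw [Pi.norm_def, hi0]
    simp
  rw [hnorm, Real.norm_eq_abs, sq_abs, sq]
  exact Finset.single_le_sum (fun i _ => mul_self_nonneg (t i)) (mem_univ i0)

lemma aux_ip {n : ℕ} (v t' : Fin n → ℝ) (s : ℝ) (i : Fin n) :
    ∑ i', v i' * (t' + s • (Pi.single i (1:ℝ) : Fin n → ℝ)) i' = (∑ i', v i' * t' i') + s * v i := by
  have hterm : ∀ i', v i' * (t' + s • (Pi.single i (1:ℝ) : Fin n → ℝ)) i'
      = v i' * t' i' + (if i' = i then s * v i else 0) := by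
    intro i'
    rcases eq_or_ne i' i with rfl | hne
    · simp [Pi.single_apply]; ring
    · simp [Pi.single_apply, hne]
  simp_rw [hterm, Finset.sum_add_distrib, Finset.sum_ite_eq' univ]
  simp

/-- Let `β_1, …, β_r ∈ ℝⁿ` and positive weights `a_1, …, a_r`,
with `conv{β_1, …, β_r}` having nonempty interior. The (logarithmic) moment map
`μ(t) = (∑_j a_j e^{⟨β_j,t⟩} β_j) / (∑_j a_j e^{⟨β_j,t⟩})` has range exactly the
interior of `conv{β_1, …, β_r}`. -/
theorem stmt14 (n r : ℕ) (hn : 1 ≤ n) (hr : 1 ≤ r)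
    (β : Fin r → (Fin n → ℝ)) (a : Fin r → ℝ) (ha : ∀ j, 0 < a j)
    (hint : (interior (convexHull ℝ (Set.range β))).Nonempty)
    (μ : (Fin n → ℝ) → (Fin n → ℝ))
    (hμ : ∀ t, μ t = (∑ j, a j * Real.exp (∑ i, β j i * t i))⁻¹ •
      (∑ j, (a j * Real.exp (∑ i, β j i * t i)) • β j)) :
    Set.range μ = interior (convexHull ℝ (Set.range β)) := by
  have hrne : (univ : Finset (Fin r)).Nonempty := ⟨⟨0, hr⟩, mem_univ _⟩
  set c : (Fin n → ℝ) → Fin r → ℝ := fun t j => a j * Real.exp (∑ i, β j i * t i) with hc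
  set S : (Fin n → ℝ) → ℝ := fun t => ∑ j, c t j with hS
  have hcpos : ∀ t j, 0 < c t j := fun t j => mul_pos (ha j) (Real.exp_pos _)
  have hSpos : ∀ t, 0 < S t := fun t => Finset.sum_pos (fun j _ => hcpos t j) hrne
  apply Set.Subset.antisymm
  · -- range μ ⊆ interior
    rintro _ ⟨t, rfl⟩
    have hμt : μ t = ∑ j, ((S t)⁻¹ * c t j) • β j := by
      rw [hμ t, Finset.smul_sum]
      refine Finset.sum_congr rfl fun j _ => ?_
      rw [smul_smul]
    rw [hμt]
    apply aux_pos_interior hr β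
      (fun j => mul_pos (inv_pos.2 (hSpos t)) (hcpos t j)) _ hint
    rw [← Finset.mul_sum]
    exact inv_mul_cancel₀ (hSpos t).ne'
  · -- interior ⊆ range μ
    intro y hy
    obtain ⟨ε, hεpos, hball⟩ : ∃ ε > 0, Metric.ball y ε ⊆ convexHull ℝ (Set.range β) := by
      rw [mem_interior_iff_mem_nhds] at hy
      exact Metric.mem_nhds_iff.mp hy
    set g : (Fin n → ℝ) → ℝ := fun t => Real.log (S t) - ∑ i, y i * t i with hg
    have hScont : Continuous S := by
      apply continuous_finset_sum
      intro j _
      apply continuous_const.mul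
      apply Real.continuous_exp.comp
      apply continuous_finset_sum
      intro i _
      exact continuous_const.mul (continuous_apply i)
    have hgcont : Continuous g := by
      apply Continuous.sub
      · exact hScont.log (fun t => (hSpos t).ne')
      · apply continuous_finset_sum
        intro i _
        exact continuous_const.mul (continuous_apply i)
    set C : ℝ := univ.inf' hrne (fun j => Real.log (a j)) with hC
    have hbound : ∀ t, C + (ε/2) * ‖t‖ ≤ g t := by
      intro t
      obtain ⟨j0, _, hj0⟩ := Finset.exists_max_image univ (fun j => ∑ i, β j i * t i) hrne
      have h1 : Real.log (a j0) + (∑ i, β j0 i * t i) ≤ Real.log (S t) := by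
        rw [← Real.log_exp (∑ i, β j0 i * t i), ← Real.log_mul (ha j0).ne' (Real.exp_pos _).ne']
        exact Real.log_le_log (mul_pos (ha j0) (Real.exp_pos _))
          (Finset.single_le_sum (fun j _ => (hcpos t j).le) (mem_univ j0))
      have h2 : C ≤ Real.log (a j0) := Finset.inf'_le _ (mem_univ j0)
      have h3 : (∑ i, y i * t i) + (ε/2) * ‖t‖ ≤ ∑ i, β j0 i * t i := by
        rcases eq_or_ne t 0 with rfl | ht
        · simp
        · have hnt : 0 < ‖t‖ := norm_pos_iff.mpr ht
          set p : Fin n → ℝ := y + (ε/(2 * ‖t‖)) • t with hp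
          have hpmem : p ∈ convexHull ℝ (Set.range β) := by
            apply hball
            rw [Metric.mem_ball, dist_eq_norm]
            have hpy : p - y = (ε/(2 * ‖t‖)) • t := by rw [hp]; abel
            rw [hpy, norm_smul, Real.norm_eq_abs, abs_of_pos (by positivity)]
            have heq : ε / (2 * ‖t‖) * ‖t‖ = ε / 2 := by
              field_simp
            rw [heq]
            linarith
          have hple := aux_halfspace β (fun j => hj0 j (mem_univ j)) hpmem
          have hexp : ∑ i, p i * t i = (∑ i, y i * t i) + (ε/(2*‖t‖)) * ∑ i, t i * t i := by
            simp only [hp, Pi.add_apply, Pi.smul_apply, smul_eq_mul, add_mul,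
              Finset.sum_add_distrib, Finset.mul_sum, mul_assoc]
          have hsq := aux_norm_sq hn t
          have hlow : (ε/2) * ‖t‖ ≤ (ε/(2*‖t‖)) * ∑ i, t i * t i := by
            calc (ε/2) * ‖t‖ = (ε/(2*‖t‖)) * ‖t‖^2 := by
                  field_simp
            _ ≤ (ε/(2*‖t‖)) * ∑ i, t i * t i :=
                  mul_le_mul_of_nonneg_left hsq (by positivity)
          rw [hexp] at hple
          linarith
      simp only [hg]
      linarith
    have htend : Filter.Tendsto g (Filter.cocompact _) Filter.atTop := by
      apply Filter.tendsto_atTop_mono hbound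
      apply Filter.tendsto_atTop_add_const_left
      exact (tendsto_norm_cocompact_atTop).const_mul_atTop (by positivity)
    obtain ⟨t0, ht0⟩ := hgcont.exists_forall_le htend
    have hip := @aux_ip n
    refine ⟨t0, ?_⟩
    rw [hμ t0]
    funext i
    set b : Fin r → ℝ := fun j => ∑ i', β j i' * t0 i' with hb
    set h : ℝ → ℝ := fun s => Real.log (∑ j, a j * Real.exp (b j + s * β j i)) -
      ((∑ i', y i' * t0 i') + s * y i) with hh
    have hkey : ∀ s, h s = g (t0 + s • (Pi.single i (1:ℝ) : Fin n → ℝ)) := by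
      intro s
      simp only [hh, hg, hS, hc, hb]
      rw [hip y t0 s i]
      congr 2
      exact Finset.sum_congr rfl fun j _ => by rw [hip (β j) t0 s i]
    have hlocmin : IsLocalMin h 0 := by
      apply Filter.Eventually.of_forall
      intro s
      rw [hkey s, hkey 0]
      simp only [zero_smul, add_zero]
      exact ht0 _
    have hF : HasDerivAt (fun s : ℝ => ∑ j, a j * Real.exp (b j + s * β j i))
        (∑ j, a j * (Real.exp (b j + 0 * β j i) * β j i)) 0 := by
      apply HasDerivAt.fun_sum
      intro j _
      exact (((hasDerivAt_mul_const (β j i)).const_add (b j)).exp).const_mul (a j)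
    have hF0 : (∑ j, a j * Real.exp (b j + 0 * β j i)) ≠ 0 := by
      have : 0 < ∑ j, a j * Real.exp (b j + 0 * β j i) :=
        Finset.sum_pos (fun j _ => mul_pos (ha j) (Real.exp_pos _)) hrne
      exact this.ne'
    have hDh : HasDerivAt h
        ((∑ j, a j * (Real.exp (b j + 0 * β j i) * β j i)) /
          (∑ j, a j * Real.exp (b j + 0 * β j i)) - y i) 0 := by
      apply HasDerivAt.sub
      · exact hF.log hF0
      · exact (hasDerivAt_mul_const (y i)).const_add _
    have hD := hlocmin.hasDerivAt_eq_zero hDh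
    simp only [zero_mul, add_zero] at hD hF0
    have hyi : y i = (∑ j, a j * (Real.exp (b j) * β j i)) / (∑ j, a j * Real.exp (b j)) := by
      linarith [hD]
    rw [Pi.smul_apply, Finset.sum_apply, smul_eq_mul, hyi]
    rw [div_eq_inv_mul]
    congr 1
    refine Finset.sum_congr rfl fun j _ => ?_
    rw [Pi.smul_apply, smul_eq_mul]
    ring
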